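/- If G is a good graph of order n with δ(G) = 2 and Δ(G) = n − 2, then every vertex of degree n − 2 in G has all of its neighbors of degree 2. -/
import Mathlib


/-- Number of k-nearly independent vertex subsets: subsets whose induced subgraph has exactly k edges. -/
def sigmaK {V : Type*} [Fintype V] [DecidableEq V] (G : SimpleGraph V) [DecidableRel G.Adj] (k : ℕ) : ℕ :=
  (Finset.univ.filter fun s : Finset V =>
    (s.sym2.filter fun e => e ∈ G.edgeSet).card = k).card

/-- A graph is good if for every edge uv, N[u] ∪ N[v] = V(G). -/
def IsGoodGraph {V : Type*} (G : SimpleGraph V) : Prop :=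
  ∀ u v : V, G.Adj u v →
    (insert u (G.neighborSet u)) ∪ (insert v (G.neighborSet v)) = Set.univ

theorem stmt16 {V : Type*} [Fintype V] [Nonempty V] (G : SimpleGraph V) [DecidableRel G.Adj]
    (hgood : IsGoodGraph G)
    (hmin : G.minDegree = 2) (hmax : G.maxDegree = Fintype.card V - 2) :
    ∀ v : V, G.degree v = Fintype.card V - 2 → ∀ u : V, G.Adj v u → G.degree u = 2 := by
  classical
  intro v hv u huv
  set n := Fintype.card V with hn
  have hge : 2 ≤ G.degree u := hmin ▸ G.minDegree_le_degree u
  have hvge : 2 ≤ G.degree v := hmin ▸ G.minDegree_le_degree v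
  have hvlt : G.degree v < n := G.degree_lt_card_verts v
  have hn4 : 4 ≤ n := by omega
  by_cases hcase : n = 4
  · have hule : G.degree u ≤ n - 2 := hmax ▸ G.degree_le_maxDegree u
    omega
  have hn5 : 5 ≤ n := by omega
  -- the unique non-neighbor w of v
  have hcardins : (insert v (G.neighborFinset v)).card = n - 1 := by
    rw [Finset.card_insert_of_notMem (G.notMem_neighborFinset_self v),
      G.card_neighborFinset_eq_degree, hv]
    omega
  have hcompl : ((insert v (G.neighborFinset v))ᶜ).card = 1 := by
    rw [Finset.card_compl, hcardins]
    omega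
  obtain ⟨w, hw⟩ := Finset.card_eq_one.mp hcompl
  have hwchar : ∀ x : V, x ∉ insert v (G.neighborFinset v) ↔ x = w := by
    intro x
    rw [← Finset.mem_compl, hw, Finset.mem_singleton]
  have hwv : ¬ (w = v ∨ G.Adj v w) := by
    have := (hwchar w).mpr rfl
    simpa [Finset.mem_insert, SimpleGraph.mem_neighborFinset] using this
  push_neg at hwv
  -- every neighbor t of v is adjacent to w
  have hadjw : ∀ t : V, G.Adj v t → G.Adj t w := by
    intro t ht
    have hgt := hgood v t ht
    have hwmem : w ∈ (insert v (G.neighborSet v)) ∪ (insert t (G.neighborSet t)) := by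
      rw [hgt]; trivial
    simp only [Set.mem_union, Set.mem_insert_iff, SimpleGraph.mem_neighborSet] at hwmem
    rcases hwmem with (h | h) | (h | h)
    · exact absurd h hwv.1
    · exact absurd h hwv.2
    · exact absurd (h ▸ ht) hwv.2
    · exact h.symm.symm
  -- degree of w is large
  have hNvw : G.neighborFinset v ⊆ G.neighborFinset w := by
    intro t ht
    rw [SimpleGraph.mem_neighborFinset] at ht ⊢
    exact (hadjw t ht).symm
  have hwdeg : n - 2 ≤ G.degree w := by
    have := Finset.card_le_card hNvw
    rwa [G.card_neighborFinset_eq_degree, G.card_neighborFinset_eq_degree, hv] at this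
  -- minimal degree vertex z
  obtain ⟨z, hz⟩ := G.exists_minimal_degree_vertex
  have hzdeg : G.degree z = 2 := by rw [← hz, hmin]
  have hzv : z ≠ v := fun h => by rw [h, hv] at hzdeg; omega
  have hzw : z ≠ w := fun h => by rw [h] at hzdeg; omega
  have hzadjv : G.Adj v z := by
    by_contra hne
    exact hzw (((hwchar z).mp (by simp [SimpleGraph.mem_neighborFinset, hzv, hne])))
  have hzadjw : G.Adj z w := hadjw z hzadjv
  have hwnev : w ≠ v := hwv.1
  -- N(z) = {v, w}
  have hNz : G.neighborFinset z = {v, w} := by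
    apply Finset.eq_of_superset_of_card_ge
    · intro x hx
      rw [SimpleGraph.mem_neighborFinset]
      rcases Finset.mem_insert.mp hx with h | h
      · exact h ▸ hzadjv.symm
      · rw [Finset.mem_singleton] at h
        exact h ▸ hzadjw
    · rw [G.card_neighborFinset_eq_degree, hzdeg]
      rw [Finset.card_insert_of_notMem (by simp [hwnev.symm]), Finset.card_singleton]
  have hzadjchar : ∀ x : V, G.Adj z x → x = v ∨ x = w := by
    intro x hx
    have : x ∈ G.neighborFinset z := (SimpleGraph.mem_neighborFinset _ _ _).mpr hx
    rw [hNz] at this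
    simpa using this
  -- u's neighbors are contained in {v, w}
  have hunew : u ≠ w := by
    intro h
    exact hwv.2 (h ▸ huv)
  have hNu : G.neighborFinset u ⊆ {v, w} := by
    intro x hx
    rw [SimpleGraph.mem_neighborFinset] at hx
    by_contra hmem
    simp only [Finset.mem_insert, Finset.mem_singleton, not_or] at hmem
    obtain ⟨hxv, hxw⟩ := hmem
    have hxadjv : G.Adj v x := by
      by_contra hne
      exact hxw ((hwchar x).mp (by simp [SimpleGraph.mem_neighborFinset, hxv, hne]))
    -- z must be in N[u] ∪ N[x]
    have hgt := hgood u x hx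
    have hzmem : z ∈ (insert u (G.neighborSet u)) ∪ (insert x (G.neighborSet x)) := by
      rw [hgt]; trivial
    simp only [Set.mem_union, Set.mem_insert_iff, SimpleGraph.mem_neighborSet] at hzmem
    have hunev : u ≠ v := fun h => (h ▸ huv).ne rfl
    rcases hzmem with (h | h) | (h | h)
    · rcases hzadjchar x (h ▸ hx) with h' | h'
      · exact hxv h'
      · exact hxw h'
    · rcases hzadjchar u h.symm with h' | h'
      · exact hunev h'
      · exact hunew h'
    · rcases hzadjchar u (h ▸ hx.symm) with h' | h'
      · exact hunev h'
      · exact hunew h'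
    · rcases hzadjchar x h.symm with h' | h'
      · exact hxv h'
      · exact hxw h'
  have hule : G.degree u ≤ 2 := by
    have := Finset.card_le_card hNu
    rw [G.card_neighborFinset_eq_degree] at this
    calc G.degree u ≤ ({v, w} : Finset V).card := this
      _ ≤ 2 := Finset.card_insert_le _ _ |>.trans (by simp)
  omega
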